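/- Consider ℝ² with the 2-norm ‖(a₁,a₂),(b₁,b₂)‖ = |a₁b₂ − a₂b₁|. The sequence (xₙ) given by xₙ = (√n, √n) is quasi-Cauchy, but its subsequence (x_{n²}) = (n, n) is not quasi-Cauchy; in particular, a subsequence of a quasi-Cauchy sequence need not be quasi-Cauchy. -/

import Mathlib

open Filter Topology

/-- `ν` is a 2-norm on the real vector space `X`. -/
structure Is2Norm {X : Type*} [AddCommGroup X] [Module ℝ X] (ν : X → X → ℝ) : Prop where
  eq_zero_iff : ∀ x y : X, ν x y = 0 ↔ ¬ LinearIndependent ℝ ![x, y]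
  symm : ∀ x y : X, ν x y = ν y x
  smul_left : ∀ (α : ℝ) (x y : X), ν (α • x) y = |α| * ν x y
  add_right : ∀ x y z : X, ν x (y + z) ≤ ν x y + ν x z

/-- A sequence is quasi-Cauchy w.r.t. the 2-norm `ν`. -/
def QuasiCauchy {X : Type*} [AddCommGroup X] (ν : X → X → ℝ) (x : ℕ → X) : Prop :=
  ∀ z : X, Tendsto (fun n => ν (x (n + 1) - x n) z) atTop (𝓝 0)

/-- A sequence converges to `x₀` w.r.t. the 2-norm `ν`. -/
def ConvergesTo {X : Type*} [AddCommGroup X] (ν : X → X → ℝ) (x : ℕ → X) (x₀ : X) : Prop :=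
  ∀ z : X, Tendsto (fun n => ν (x n - x₀) z) atTop (𝓝 0)

/-- A set is ward compact: every sequence in it admits a quasi-Cauchy subsequence. -/
def WardCompact {X : Type*} [AddCommGroup X] (ν : X → X → ℝ) (E : Set X) : Prop :=
  ∀ x : ℕ → X, (∀ n, x n ∈ E) → ∃ φ : ℕ → ℕ, StrictMono φ ∧ QuasiCauchy ν (x ∘ φ)

/-- `f` is ward continuous on `E`: it maps quasi-Cauchy sequences of points of `E`
to quasi-Cauchy sequences. -/
def WardContinuousOn {X : Type*} [AddCommGroup X] (ν : X → X → ℝ) (f : X → X) (E : Set X) :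
    Prop :=
  ∀ x : ℕ → X, (∀ n, x n ∈ E) → QuasiCauchy ν x → QuasiCauchy ν (fun n => f (x n))

/-- `f` is u-continuous on `E`. -/
def UContinuousOn {X : Type*} [AddCommGroup X] (ν : X → X → ℝ) (f : X → X) (E : Set X) : Prop :=
  ∀ ε > (0 : ℝ), ∃ δ > (0 : ℝ), ∀ x ∈ E, ∀ y ∈ E,
    (∀ z : X, ν (x - y) z < δ) → ∀ w : X, ν (f x - f y) w < ε

/-- `f` is uniformly continuous on `E` (2-normed space version with finitely many `δ`'s). -/
def UniformlyContinuousOn2 {X : Type*} [AddCommGroup X] (ν : X → X → ℝ) (f : X → X)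
    (E : Set X) : Prop :=
  ∀ ε > (0 : ℝ), ∀ w : X, ∃ (p : ℕ) (δ : Fin p → ℝ) (z : Fin p → X), 0 < p ∧
    (∀ k, 0 < δ k) ∧
    ∀ x ∈ E, ∀ y ∈ E, (∀ k, ν (x - y) (z k) < δ k) → ν (f x - f y) w < ε

/-- The sequence of functions `F` converges uniformly to `f` on `E` w.r.t. the 2-norm `ν`. -/
def UniformConvTo {X : Type*} [AddCommGroup X] (ν : X → X → ℝ) (F : ℕ → X → X) (f : X → X)
    (E : Set X) : Prop :=
  ∀ ε > (0 : ℝ), ∃ N : ℕ, ∀ n ≥ N, ∀ x ∈ E, ∀ z : X, ν (F n x - f x) z < ε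

theorem stmt12 :
    QuasiCauchy (fun a b : ℝ × ℝ => |a.1 * b.2 - a.2 * b.1|)
      (fun n : ℕ => ((Real.sqrt n, Real.sqrt n) : ℝ × ℝ)) ∧
    ¬ QuasiCauchy (fun a b : ℝ × ℝ => |a.1 * b.2 - a.2 * b.1|)
      (fun n : ℕ => ((Real.sqrt (n ^ 2), Real.sqrt (n ^ 2)) : ℝ × ℝ)) := by
  constructor
  · intro z
    have hd : Tendsto (fun n : ℕ => Real.sqrt (n + 1) - Real.sqrt n) atTop (𝓝 0) := by
      have heq : ∀ n : ℕ, Real.sqrt (n + 1) - Real.sqrt n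
          = (Real.sqrt (n + 1) + Real.sqrt n)⁻¹ := by
        intro n
        have h1 : (0:ℝ) < Real.sqrt (n + 1) :=
          Real.sqrt_pos.2 (by positivity)
        have h2 : (0:ℝ) ≤ Real.sqrt n := Real.sqrt_nonneg _
        have e1 : Real.sqrt ((n:ℝ)+1) * Real.sqrt ((n:ℝ)+1) = (n:ℝ)+1 :=
          Real.mul_self_sqrt (by positivity)
        have e2 : Real.sqrt (n:ℝ) * Real.sqrt (n:ℝ) = (n:ℝ) :=
          Real.mul_self_sqrt (by positivity)
        refine eq_inv_of_mul_eq_one_left ?_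
        nlinarith
      have hs : Tendsto (fun n : ℕ => Real.sqrt n) atTop atTop := by
        refine tendsto_atTop_atTop.2 fun b => ⟨⌈b⌉₊ ^ 2, fun n hn => ?_⟩
        have hcast : ((⌈b⌉₊:ℝ)) ^ 2 ≤ (n:ℝ) := by exact_mod_cast hn
        have : (⌈b⌉₊:ℝ) ≤ Real.sqrt n := by
          rw [show ((⌈b⌉₊:ℝ)) = Real.sqrt (((⌈b⌉₊:ℝ)) ^ 2) from
            (Real.sqrt_sq (by positivity)).symm]
          exact Real.sqrt_le_sqrt hcast
        linarith [Nat.le_ceil b]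
      have hatop : Tendsto (fun n : ℕ => Real.sqrt (n + 1) + Real.sqrt n) atTop atTop := by
        exact hs.nonneg_add_atTop (fun n => Real.sqrt_nonneg _)
      simpa [heq, Pi.inv_def] using hatop.inv_tendsto_atTop
    have key : Tendsto (fun n : ℕ => |(Real.sqrt (n + 1) - Real.sqrt n) * (z.2 - z.1)|)
        atTop (𝓝 0) := by
      have := (hd.mul_const (z.2 - z.1)).abs
      simpa using this
    convert key using 2 with n
    push_cast
    simp only [Prod.sub_def]
    ring_nf
  · intro h
    have h1 := h (0, 1)
    have h2 : Tendsto (fun _ : ℕ => (1:ℝ)) atTop (𝓝 0) := by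
      convert h1 using 2 with n
      have e1 : Real.sqrt (((n:ℝ)+1) ^ 2) = (n:ℝ)+1 := Real.sqrt_sq (by positivity)
      have e2 : Real.sqrt ((n:ℝ) ^ 2) = (n:ℝ) := Real.sqrt_sq (by positivity)
      simp only [Prod.sub_def]
      push_cast
      rw [e1, e2]
      norm_num
    exact absurd (tendsto_nhds_unique h2 tendsto_const_nhds) zero_ne_one
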